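/- Let $R \to S$ be a flat local homomorphism of commutative noetherian local rings. If $S$ satisfies property (ee) (for all finitely generated $S$-modules $M,N$, $\operatorname{Ext}_S^{\gg 0}(M,N)=0$ implies $\operatorname{Ext}_S^{\gg 0}(N,M)=0$), then $R$ satisfies property (ee). -/

import Mathlib

open CategoryTheory IsLocalRing

noncomputable section

/-- The `i`-th Ext group of `R`-modules `M`, `N`, as a `ModuleCat R`. -/
def ExtGroup (R : Type) [CommRing R] (i : ℕ) (M N : ModuleCat.{0} R) : ModuleCat R :=
  ((Ext R (ModuleCat.{0} R) i).obj (Opposite.op M)).obj N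

/-- The `i`-th Tor group. -/
def TorGroup (R : Type) [CommRing R] (i : ℕ) (M N : ModuleCat.{0} R) : ModuleCat R :=
  ((Tor (ModuleCat.{0} R) i).obj M).obj N

/-- `Ext_R^i(M, N) = 0` for all `i ≫ 0`. -/
def ExtEventuallyZero (R : Type) [CommRing R] (M N : ModuleCat.{0} R) : Prop :=
  ∃ t : ℕ, ∀ i > t, Subsingleton (ExtGroup R i M N)

/-- Property (ee). -/
def PropEE (R : Type) [CommRing R] : Prop :=
  ∀ M N : ModuleCat.{0} R, Module.Finite R M → Module.Finite R N →
    ExtEventuallyZero R M N → ExtEventuallyZero R N M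

/-- Gorenstein: `Ext^i(k, R) = 0` for `i ≫ 0`. -/
def IsGorensteinLocalRing (R : Type) [CommRing R] [IsLocalRing R] : Prop :=
  ∃ t : ℕ, ∀ i > t, Subsingleton
    (ExtGroup R i (ModuleCat.of R (ResidueField R)) (ModuleCat.of R R))

open Classical in
/-- depth of a module over a local ring, with depth of zero module = ⊤. -/
def rdepth (R : Type) [CommRing R] [IsLocalRing R]
    (M : Type) [AddCommGroup M] [Module R M] : ℕ∞ :=
  if Subsingleton M then ⊤ else
    sSup {n : ℕ∞ | ∃ rs : List R, (rs.length : ℕ∞) = n ∧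
      (∀ r ∈ rs, r ∈ maximalIdeal R) ∧ RingTheory.Sequence.IsRegular M rs}

/-- Totally reflexive module. -/
def IsTotallyReflexive (R : Type) [CommRing R]
    (M : Type) [AddCommGroup M] [Module R M] : Prop :=
  Module.Finite R M ∧ Function.Bijective (Module.Dual.eval R M) ∧
  (∀ i > 0, Subsingleton (ExtGroup R i (ModuleCat.of R M) (ModuleCat.of R R))) ∧
  (∀ i > 0, Subsingleton
    (ExtGroup R i (ModuleCat.of R (Module.Dual R M)) (ModuleCat.of R R)))

/-- Property (tr). -/
def PropTR (R : Type) [CommRing R] : Prop :=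
  ∀ (M : Type) [AddCommGroup M] [Module R M], Module.Finite R M →
    (∀ i > 0, Subsingleton (ExtGroup R i (ModuleCat.of R M) (ModuleCat.of R R))) →
    IsTotallyReflexive R M

/-- Property (dep): the depth formula (written additively to avoid truncated subtraction). -/
def PropDep (R : Type) [CommRing R] [IsLocalRing R] : Prop :=
  ∀ (M N : Type) [AddCommGroup M] [Module R M] [AddCommGroup N] [Module R N],
    Module.Finite R M → Module.Finite R N → Nontrivial M → Nontrivial N →
    (∀ i > 0, Subsingleton (TorGroup R i (ModuleCat.of R M) (ModuleCat.of R N))) →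
    rdepth R (TensorProduct R M N) + rdepth R R = rdepth R M + rdepth R N

/-- AB ring. -/
def IsABRing (R : Type) [CommRing R] [IsLocalRing R] : Prop :=
  IsGorensteinLocalRing R ∧ ∃ n : ℕ, ∀ M N : ModuleCat.{0} R,
    Module.Finite R M → Module.Finite R N → ExtEventuallyZero R M N →
    ∀ i > n, Subsingleton (ExtGroup R i M N)

/-- A complex of finitely generated projective modules, indexed by `ℤ`. -/
structure FGProjComplex (R : Type) [CommRing R] where
  X : ℤ → Type
  [acg : ∀ n, AddCommGroup (X n)]
  [mod : ∀ n, Module R (X n)]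
  [fin : ∀ n, Module.Finite R (X n)]
  [proj : ∀ n, Module.Projective R (X n)]
  d : ∀ n : ℤ, X n →ₗ[R] X (n + 1)
  dd : ∀ n : ℤ, (d (n + 1)).comp (d n) = 0

attribute [instance] FGProjComplex.acg FGProjComplex.mod FGProjComplex.fin FGProjComplex.proj

/-- Acyclicity of such a complex. -/
def FGProjComplex.Acyclic {R : Type} [CommRing R] (C : FGProjComplex R) : Prop :=
  ∀ n : ℤ, LinearMap.ker (C.d (n + 1)) = LinearMap.range (C.d n)

/-- The dual complex is acyclic. -/
def FGProjComplex.DualAcyclic {R : Type} [CommRing R] (C : FGProjComplex R) : Prop :=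
  ∀ n : ℤ, LinearMap.ker ((C.d n).dualMap) = LinearMap.range ((C.d (n + 1)).dualMap)

/-- Property (tac): every acyclic complex of f.g. projective modules is totally acyclic. -/
def PropTAC (R : Type) [CommRing R] : Prop :=
  ∀ C : FGProjComplex R, C.Acyclic → C.DualAcyclic

/-- `M` is an ∞-syzygy. -/
def IsInfiniteSyzygy (R : Type) [CommRing R]
    (M : Type) [AddCommGroup M] [Module R M] : Prop :=
  Module.Finite R M ∧
  ∃ (k : ℕ → ℕ) (f : M →ₗ[R] (Fin (k 0) → R))
    (d : ∀ n : ℕ, (Fin (k n) → R) →ₗ[R] (Fin (k (n + 1)) → R)),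
    Function.Injective f ∧ LinearMap.ker (d 0) = LinearMap.range f ∧
    ∀ n : ℕ, LinearMap.ker (d (n + 1)) = LinearMap.range (d n)

end

noncomputable section

/-- Minimal `n`-th syzygy: `IsMinimalSyzygy R n M K` says `K` is the `n`-th syzygy of `M`
computed from a minimal free resolution. -/
def IsMinimalSyzygy (R : Type) [CommRing R] [IsLocalRing R] :
    ℕ → ModuleCat.{0} R → ModuleCat.{0} R → Prop
  | 0, M, K => Nonempty (K ≃ₗ[R] M)
  | n + 1, M, K => ∃ (m : ℕ) (f : (Fin m → R) →ₗ[R] M),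
      Function.Surjective f ∧
      (LinearMap.ker f ≤ (maximalIdeal R) • (⊤ : Submodule R (Fin m → R))) ∧
      IsMinimalSyzygy R n (ModuleCat.of R (LinearMap.ker f)) K

/-- A resolving class of modules: contains `R`, closed under isomorphisms, direct summands,
extensions and syzygies. -/
def IsResolvingClass (R : Type) [CommRing R] (P : ModuleCat.{0} R → Prop) : Prop :=
  (P (ModuleCat.of R R)) ∧
  (∀ X Y : ModuleCat.{0} R, Nonempty (X ≃ₗ[R] Y) → P X → P Y) ∧
  (∀ (X Y : ModuleCat.{0} R) (i : X →ₗ[R] Y) (r : Y →ₗ[R] X),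
      r.comp i = LinearMap.id → P Y → P X) ∧
  (∀ (X Y Z : ModuleCat.{0} R) (f : X →ₗ[R] Y) (g : Y →ₗ[R] Z),
      Function.Injective f → Function.Surjective g → LinearMap.ker g = LinearMap.range f →
      P X → P Z → P Y) ∧
  (∀ (X Y : ModuleCat.{0} R) (m : ℕ) (f : (Fin m → R) →ₗ[R] X), Function.Surjective f →
      Nonempty (Y ≃ₗ[R] LinearMap.ker f) → P X → P Y)

/-- `N` belongs to the resolving closure `res M`. -/
def InResolvingClosure (R : Type) [CommRing R] (M N : ModuleCat.{0} R) : Prop :=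
  ∀ P : ModuleCat.{0} R → Prop, IsResolvingClass R P → P M → P N

/-- `M` has finite G-dimension: it admits a finite resolution by totally reflexive modules. -/
def HasFiniteGDim (R : Type) [CommRing R] (M : Type) [AddCommGroup M] [Module R M] : Prop :=
  ∃ (n : ℕ) (T : ℕ → ModuleCat.{0} R) (d : ∀ i : ℕ, T (i + 1) →ₗ[R] T i) (ε : T 0 →ₗ[R] M),
    (∀ i, IsTotallyReflexive R (T i)) ∧ Function.Surjective ε ∧
    LinearMap.ker ε = LinearMap.range (d 0) ∧
    (∀ i, LinearMap.ker (d i) = LinearMap.range (d (i + 1))) ∧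
    (∀ i > n, Subsingleton (T i))

/-- `ω` is a canonical module of the `d`-dimensional Cohen–Macaulay local ring `R`:
`Ext^i(k, ω)` vanishes for `i ≠ d` and is isomorphic to `k` for `i = d`. -/
def IsCanonicalModule (R : Type) [CommRing R] [IsLocalRing R] (d : ℕ)
    (ω : ModuleCat.{0} R) : Prop :=
  Module.Finite R ω ∧
  (∀ i : ℕ, i ≠ d → Subsingleton (ExtGroup R i (ModuleCat.of R (ResidueField R)) ω)) ∧
  Nonempty ((ExtGroup R d (ModuleCat.of R (ResidueField R)) ω) ≃ₗ[R] (ResidueField R))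

/-- Cohen–Macaulay local ring: depth equals Krull dimension. -/
def IsCohenMacaulayLocalRing (R : Type) [CommRing R] [IsLocalRing R] : Prop :=
  (rdepth R R : WithBot ℕ∞) = ringKrullDim R

end


namespace StmtFive

noncomputable section

open TensorProduct

/-- A free resolution with chosen finite bases. -/
structure MyRes (A : Type) [CommRing A] (M : Type) [AddCommGroup M] [Module A M] where
  k : ℕ → ℕ
  P : ℕ → Type
  [acg : ∀ n, AddCommGroup (P n)]
  [mod : ∀ n, Module A (P n)]
  b : ∀ n, Module.Basis (Fin (k n)) A (P n)
  d : ∀ n, P (n + 1) →ₗ[A] P n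
  ε : P 0 →ₗ[A] M
  surj : Function.Surjective ε
  ex0 : Function.Exact (d 0) ε
  ex : ∀ n, Function.Exact (d (n + 1)) (d n)

attribute [instance] MyRes.acg MyRes.mod

lemma moduleCat_subsingleton_iff_isZero {A : Type} [CommRing A] (X : ModuleCat.{0} A) :
    Subsingleton X ↔ Limits.IsZero X := by
  constructor
  · intro h; exact ModuleCat.isZero_of_subsingleton X
  · intro h
    have h1 : (𝟙 X : X ⟶ X) = 0 := h.eq_of_src _ _
    refine ⟨fun x y => ?_⟩
    have hx : x = (𝟙 X : X ⟶ X) x := rfl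
    have hy : y = (𝟙 X : X ⟶ X) y := rfl
    rw [hx, hy, h1]
    rfl

namespace MyRes

variable {A : Type} [CommRing A] {M : Type} [AddCommGroup M] [Module A M]
  (F : MyRes A M)

/-- The chain complex of the resolution. -/
def cplx : ChainComplex (ModuleCat.{0} A) ℕ :=
  ChainComplex.of (fun n => ModuleCat.of A (F.P n)) (fun n => ModuleCat.ofHom (F.d n))
    (fun n => ModuleCat.hom_ext (LinearMap.ext fun x => (F.ex n).apply_apply_eq_zero x))

instance (n : ℕ) : Projective (F.cplx.X n) :=
  ModuleCat.projective_of_free (F.b n)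

lemma cplx_d (n : ℕ) :
    F.cplx.d (n + 1) n = ModuleCat.ofHom (F.d n) :=
  ChainComplex.of_d (fun n => ModuleCat.of A (F.P n)) (fun n => ModuleCat.ofHom (F.d n)) n

lemma cplx_exactAt_succ (n : ℕ) : F.cplx.ExactAt (n + 1) := by
  rw [F.cplx.exactAt_iff' (n + 2) (n + 1) n (by simp) (by simp)]
  rw [ShortComplex.moduleCat_exact_iff]
  intro x hx
  have hx' : F.d n x = 0 := by
    rw [show (F.cplx.sc' (n+2) (n+1) n).g = F.cplx.d (n+1) n from rfl, F.cplx_d n] at hx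
    exact hx
  obtain ⟨y, hy⟩ := (F.ex n x).mp hx'
  refine ⟨y, ?_⟩
  rw [show (F.cplx.sc' (n+2) (n+1) n).f = F.cplx.d (n+2) (n+1) from rfl, F.cplx_d (n+1)]
  exact hy

lemma d_eps_zero : F.cplx.d 1 0 ≫ ModuleCat.ofHom F.ε = 0 := by
  rw [F.cplx_d 0]
  exact ModuleCat.hom_ext (LinearMap.ext fun x => F.ex0.apply_apply_eq_zero x)

def resPi : F.cplx ⟶ (ChainComplex.single₀ (ModuleCat.{0} A)).obj (ModuleCat.of A M) :=
  (ChainComplex.toSingle₀Equiv _ _).symm ⟨ModuleCat.ofHom F.ε, F.d_eps_zero⟩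

lemma resPi_f_zero : F.resPi.f 0 = ModuleCat.ofHom F.ε :=
  ChainComplex.toSingle₀Equiv_symm_apply_f_zero _ _

def projRes : ProjectiveResolution (ModuleCat.of A M) where
  complex := F.cplx
  π := F.resPi
  quasiIso := ⟨fun n => by
    cases n with
    | zero =>
      rw [ChainComplex.quasiIsoAt₀_iff, ShortComplex.quasiIso_iff_of_zeros']
      · have hτ : ((HomologicalComplex.shortComplexFunctor' (ModuleCat.{0} A) _ 1 0 0).map
            F.resPi).τ₂ = F.resPi.f 0 := rfl
        constructor
        · rw [ShortComplex.moduleCat_exact_iff]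
          intro x hx
          have h2 : (F.resPi.f 0) x = 0 := hx
          rw [F.resPi_f_zero] at h2
          obtain ⟨y, hy⟩ := (F.ex0 x).mp h2
          refine ⟨y, ?_⟩
          show (F.cplx.d 1 0) y = x
          rw [F.cplx_d 0]
          exact hy
        · rw [hτ, F.resPi_f_zero]
          exact (ModuleCat.epi_iff_surjective _).mpr F.surj
      · rfl
      · rfl
      · rfl
    | succ n =>
      rw [quasiIsoAt_iff_exactAt']
      · exact F.cplx_exactAt_succ n
      · apply ChainComplex.exactAt_succ_single_obj⟩

lemma yoneda_d (N : Type) [AddCommGroup N] [Module A N] (i : ℕ) (χ : F.P i →ₗ[A] N) :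
    ((F.cplx.linearYonedaObj A (ModuleCat.of A N)).d i (i + 1) :
      (F.cplx.linearYonedaObj A (ModuleCat.of A N)).X i ⟶
      (F.cplx.linearYonedaObj A (ModuleCat.of A N)).X (i + 1)) (ModuleCat.ofHom χ) =
      ModuleCat.ofHom (χ ∘ₗ F.d i) := by
  rw [ChainComplex.linearYonedaObj_d F.cplx A (ModuleCat.of A N) i (i + 1)]
  show (F.cplx.d (i + 1) i ≫ ModuleCat.ofHom χ :
    ModuleCat.of A (F.P (i+1)) ⟶ ModuleCat.of A N) = _
  rw [F.cplx_d i]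
  rfl

/-- Ext vanishing via the resolution. -/
theorem subsingleton_ext_iff (N : Type) [AddCommGroup N] [Module A N] (n : ℕ) :
    Subsingleton (ExtGroup A (n + 1) (ModuleCat.of A M) (ModuleCat.of A N)) ↔
      Function.Exact (fun φ : F.P n →ₗ[A] N => φ ∘ₗ F.d n)
        (fun φ : F.P (n + 1) →ₗ[A] N => φ ∘ₗ F.d (n + 1)) := by
  set K := F.cplx.linearYonedaObj A (ModuleCat.of A N) with hK
  have hd : ∀ (i : ℕ) (χ : F.P i →ₗ[A] N),
      (K.d i (i + 1) : K.X i ⟶ K.X (i+1)) (ModuleCat.ofHom χ) = ModuleCat.ofHom (χ ∘ₗ F.d i) :=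
        F.yoneda_d N
  have e := F.projRes.isoExt (R := A) (n + 1) (ModuleCat.of A N)
  have h1 : Subsingleton (ExtGroup A (n + 1) (ModuleCat.of A M) (ModuleCat.of A N)) ↔
      K.ExactAt (n + 1) := by
    rw [moduleCat_subsingleton_iff_isZero, K.exactAt_iff_isZero_homology]
    exact ⟨fun h => h.of_iso e.symm, fun h => h.of_iso e⟩
  rw [h1, K.exactAt_iff' n (n + 1) (n + 2) (by simp) (by simp),
    ShortComplex.moduleCat_exact_iff]
  have hf : ∀ x : K.X n, (K.sc' n (n+1) (n+2)).f x = K.d n (n+1) x := fun _ => rfl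
  have hg : ∀ x : K.X (n+1), (K.sc' n (n+1) (n+2)).g x = K.d (n+1) (n+2) x := fun _ => rfl
  constructor
  · intro hS ψ
    constructor
    · intro h0
      obtain ⟨χ, hχ⟩ := hS (ModuleCat.ofHom ψ) ((hd (n+1) ψ).trans
        (ModuleCat.hom_ext (f := ModuleCat.ofHom (ψ ∘ₗ F.d (n+1))) (g := 0) h0))
      exact ⟨χ.hom, congrArg ModuleCat.Hom.hom ((hd n χ.hom).symm.trans hχ)⟩
    · rintro ⟨χ, rfl⟩
      exact LinearMap.ext fun x => by
        simpa using congrArg χ ((F.ex n).apply_apply_eq_zero x)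
  · intro hFE ψ h0
    have h0' : ψ.hom ∘ₗ F.d (n+1) = 0 :=
      congrArg ModuleCat.Hom.hom ((hd (n+1) ψ.hom).symm.trans h0)
    obtain ⟨χ, hχ⟩ := (hFE ψ.hom).mp h0'
    exact ⟨ModuleCat.ofHom χ,
      (hd n χ).trans (ModuleCat.hom_ext (f := ModuleCat.ofHom (χ ∘ₗ F.d n)) (g := ψ) hχ)⟩

end MyRes


section Ladder

lemma exact_of_ladder {A B C A' B' C' : Type} [Zero C] [Zero C']
    {f : A → B} {g : B → C} {f' : A' → B'} {g' : B' → C'}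
    (eA : A ≃ A') (eB : B ≃ B') (eC : C ≃ C') (hC : eC 0 = 0)
    (h1 : ∀ a, f' (eA a) = eB (f a)) (h2 : ∀ b, g' (eB b) = eC (g b))
    (hE : Function.Exact f g) : Function.Exact f' g' := by
  intro y'
  constructor
  · intro hy'
    have : g (eB.symm y') = 0 := by
      apply eC.injective
      rw [hC, ← h2, eB.apply_symm_apply, hy']
    obtain ⟨x, hx⟩ := (hE _).mp this
    exact ⟨eA x, by rw [h1, hx, eB.apply_symm_apply]⟩
  · rintro ⟨x', rfl⟩
    obtain ⟨x, rfl⟩ : ∃ x, eA x = x' := ⟨eA.symm x', eA.apply_symm_apply x'⟩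
    rw [h1, h2, (hE (f x)).mpr ⟨x, rfl⟩, hC]

lemma exact_iff_of_ladder {A B C A' B' C' : Type} [Zero C] [Zero C']
    {f : A → B} {g : B → C} {f' : A' → B'} {g' : B' → C'}
    (eA : A ≃ A') (eB : B ≃ B') (eC : C ≃ C') (hC : eC 0 = 0)
    (h1 : ∀ a, f' (eA a) = eB (f a)) (h2 : ∀ b, g' (eB b) = eC (g b)) :
    Function.Exact f' g' ↔ Function.Exact f g := by
  constructor
  · intro hE
    refine exact_of_ladder eA.symm eB.symm eC.symm ?_ ?_ ?_ hE
    · rw [← hC, eC.symm_apply_apply]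
    · intro a; rw [← eA.apply_symm_apply a, h1, eA.symm_apply_apply, eB.symm_apply_apply]
    · intro b; rw [← eB.apply_symm_apply b, h2, eB.symm_apply_apply, eC.symm_apply_apply]
  · exact exact_of_ladder eA eB eC hC h1 h2

end Ladder

section HomBC

variable {R S : Type} [CommRing R] [CommRing S] [Algebra R S]
variable {N : Type} [AddCommGroup N] [Module R N]

lemma constr_symm_apply' {k : ℕ} {P : Type} [AddCommGroup P] [Module R P]
    (b : Module.Basis (Fin k) R P) (φ : P →ₗ[R] N) :
    (b.constr (M' := N) R).symm φ = fun i => φ (b i) := by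
  rw [LinearEquiv.symm_apply_eq]
  exact (Module.Basis.ext b fun i => by rw [Module.Basis.constr_basis]).symm

/-- Base change comparison for Hom out of a finite free module. -/
def homBC {k : ℕ} {P : Type} [AddCommGroup P] [Module R P] (b : Module.Basis (Fin k) R P) :
    (S ⊗[R] (P →ₗ[R] N)) ≃ₗ[R] ((S ⊗[R] P) →ₗ[S] (S ⊗[R] N)) :=
  (LinearEquiv.lTensor S (b.constr (M' := N) R).symm).trans <|
    ((TensorProduct.piRight R S S (fun _ : Fin k => N)).restrictScalars R).trans
      (((b.baseChange S).constr (M' := S ⊗[R] N) S).restrictScalars R)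

lemma homBC_tmul {k : ℕ} {P : Type} [AddCommGroup P] [Module R P] (b : Module.Basis (Fin k) R P)
    (s : S) (φ : P →ₗ[R] N) :
    homBC b (s ⊗ₜ[R] φ) = s • (φ.baseChange S) := by
  apply Module.Basis.ext (b.baseChange S)
  intro i
  have h1 : homBC b (s ⊗ₜ[R] φ) =
      (b.baseChange S).constr (M' := S ⊗[R] N) S
        (TensorProduct.piRight R S S (fun _ : Fin k => N) (s ⊗ₜ (fun i => φ (b i)))) := by
    simp [homBC, constr_symm_apply']
  rw [h1]
  simp only [TensorProduct.piRight_apply, TensorProduct.piRightHom_tmul]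
  rw [Module.Basis.constr_basis]
  rw [Module.Basis.baseChange_apply]
  rw [LinearMap.smul_apply, LinearMap.baseChange_tmul]
  rw [smul_tmul', smul_eq_mul, mul_one]

end HomBC

section Transfer

variable {R S : Type} [CommRing R] [CommRing S] [Algebra R S]
variable {N : Type} [AddCommGroup N] [Module R N]
variable {k1 k2 k3 : ℕ} {P1 P2 P3 : Type}
  [AddCommGroup P1] [Module R P1] [AddCommGroup P2] [Module R P2]
  [AddCommGroup P3] [Module R P3]

lemma homBC_square (b1 : Module.Basis (Fin k1) R P1) (b2 : Module.Basis (Fin k2) R P2)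
    (d : P2 →ₗ[R] P1) (x : S ⊗[R] (P1 →ₗ[R] N)) :
    homBC b2 (LinearMap.lTensor S (LinearMap.lcomp R N d) x) =
      (homBC b1 x).comp (d.baseChange S) := by
  induction x using TensorProduct.induction_on with
  | zero => simp
  | tmul s φ =>
    rw [LinearMap.lTensor_tmul]
    rw [show (LinearMap.lcomp R N d) φ = φ ∘ₗ d from rfl]
    rw [homBC_tmul, homBC_tmul, LinearMap.baseChange_comp, LinearMap.smul_comp]
  | add x y hx hy =>
    rw [map_add, map_add, map_add, hx, hy, LinearMap.add_comp]

lemma exact_basechange_iff [Module.FaithfullyFlat R S]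
    (b1 : Module.Basis (Fin k1) R P1) (b2 : Module.Basis (Fin k2) R P2) (b3 : Module.Basis (Fin k3) R P3)
    (d1 : P2 →ₗ[R] P1) (d2 : P3 →ₗ[R] P2) :
    Function.Exact (fun φ : (S ⊗[R] P1) →ₗ[S] (S ⊗[R] N) => φ ∘ₗ d1.baseChange S)
      (fun φ : (S ⊗[R] P2) →ₗ[S] (S ⊗[R] N) => φ ∘ₗ d2.baseChange S) ↔
    Function.Exact (fun φ : P1 →ₗ[R] N => φ ∘ₗ d1) (fun φ : P2 →ₗ[R] N => φ ∘ₗ d2) := by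
  have L := exact_iff_of_ladder
    (f := ⇑(LinearMap.lTensor S (LinearMap.lcomp R N d1)))
    (g := ⇑(LinearMap.lTensor S (LinearMap.lcomp R N d2)))
    (f' := fun φ : (S ⊗[R] P1) →ₗ[S] (S ⊗[R] N) => φ ∘ₗ d1.baseChange S)
    (g' := fun φ : (S ⊗[R] P2) →ₗ[S] (S ⊗[R] N) => φ ∘ₗ d2.baseChange S)
    (homBC b1).toEquiv (homBC b2).toEquiv (homBC b3).toEquiv ((homBC (S := S) (N := N) b3).map_zero)
    (fun a => (homBC_square b1 b2 d1 a).symm)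
    (fun b => (homBC_square b2 b3 d2 b).symm)
  rw [L]
  constructor
  · intro hE
    exact Module.FaithfullyFlat.lTensor_reflects_exact R S _ _ hE
  · intro hE
    exact Module.Flat.lTensor_exact S hE

end Transfer


variable (A : Type) [CommRing A] [IsNoetherianRing A]

noncomputable def pick (M : Type) [AddCommGroup M] [Module A M] [Module.Finite A M] :
    Σ k : ℕ, {f : (Fin k → A) →ₗ[A] M // Function.Surjective f} :=
  ⟨(Module.Finite.exists_fin' A M).choose, (Module.Finite.exists_fin' A M).choose_spec.choose,
    (Module.Finite.exists_fin' A M).choose_spec.choose_spec⟩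

variable (M : Type) [AddCommGroup M] [Module A M] [Module.Finite A M]

noncomputable def res : ℕ → Σ k : ℕ, Submodule A (Fin k → A)
  | 0 => ⟨(pick A M).1, LinearMap.ker (pick A M).2.1⟩
  | n + 1 => ⟨(pick A ↥((res n).2)).1, LinearMap.ker (pick A ↥((res n).2)).2.1⟩

def resd (n : ℕ) : (Fin (res A M (n + 1)).1 → A) →ₗ[A] (Fin (res A M n).1 → A) :=
  (res A M n).2.subtype ∘ₗ (pick A ↥((res A M n).2)).2.1

lemma resd_ker (n : ℕ) : LinearMap.ker (resd A M n) = (res A M (n + 1)).2 := by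
  show LinearMap.ker ((res A M n).2.subtype ∘ₗ (pick A ↥((res A M n).2)).2.1) = _
  rw [LinearMap.ker_comp, Submodule.ker_subtype]
  rfl

lemma resd_range (n : ℕ) :
    LinearMap.range (resd A M n) = (res A M n).2 := by
  show LinearMap.range ((res A M n).2.subtype ∘ₗ (pick A ↥((res A M n).2)).2.1) = _
  rw [LinearMap.range_comp, LinearMap.range_eq_top.mpr (pick A ↥((res A M n).2)).2.2,
    Submodule.map_subtype_top]

noncomputable def finiteRes : MyRes A M where
  k n := (res A M n).1
  P n := Fin (res A M n).1 → A
  b n := Pi.basisFun A _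
  d n := resd A M n
  ε := (pick A M).2.1
  surj := (pick A M).2.2
  ex0 := by
    refine LinearMap.exact_iff.mpr ?_
    rw [resd_range]
    rfl
  ex n := by
    rw [LinearMap.exact_iff, resd_ker, resd_range]


def MyRes.bc {R : Type} [CommRing R] {M : Type} [AddCommGroup M] [Module R M]
    (S : Type) [CommRing S] [Algebra R S] [Module.Flat R S] (F : MyRes R M) :
    MyRes S (S ⊗[R] M) where
  k := F.k
  P n := S ⊗[R] F.P n
  b n := (F.b n).baseChange S
  d n := (F.d n).baseChange S
  ε := F.ε.baseChange S
  surj := by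
    rw [LinearMap.baseChange_eq_ltensor]
    exact LinearMap.lTensor_surjective S F.surj
  ex0 := by
    rw [LinearMap.baseChange_eq_ltensor, LinearMap.baseChange_eq_ltensor]
    exact Module.Flat.lTensor_exact S F.ex0
  ex n := by
    rw [LinearMap.baseChange_eq_ltensor, LinearMap.baseChange_eq_ltensor]
    exact Module.Flat.lTensor_exact S (F.ex n)

theorem faithfullyFlat_of_flat_local {R S : Type} [CommRing R] [IsLocalRing R]
    [CommRing S] [IsLocalRing S] [Algebra R S] [Module.Flat R S]
    [IsLocalHom (algebraMap R S)] : Module.FaithfullyFlat R S := by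
  rw [Module.FaithfullyFlat.iff_flat_and_proper_ideal]
  refine ⟨inferInstance, fun I hI htop => ?_⟩
  rw [Ideal.smul_top_eq_map, Submodule.restrictScalars_eq_top_iff] at htop
  have hle : Ideal.map (algebraMap R S) I ≤ IsLocalRing.maximalIdeal S := by
    rw [Ideal.map_le_iff_le_comap]
    intro x hx
    have hx' : ¬ IsUnit x := IsLocalRing.le_maximalIdeal hI hx
    show algebraMap R S x ∈ IsLocalRing.maximalIdeal S
    rw [IsLocalRing.mem_maximalIdeal, mem_nonunits_iff]
    intro hu
    exact hx' (IsLocalHom.map_nonunit x hu)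
  rw [htop] at hle
  exact (IsLocalRing.maximalIdeal.isMaximal S).ne_top (top_unique hle)

theorem subsingleton_ext_basechange_iff {R : Type} [CommRing R]
    (S : Type) [CommRing S] [Algebra R S] [Module.FaithfullyFlat R S]
    {M : Type} [AddCommGroup M] [Module R M] (F : MyRes R M)
    (N : Type) [AddCommGroup N] [Module R N] (n : ℕ) :
    Subsingleton (ExtGroup S (n + 1) (ModuleCat.of S (S ⊗[R] M)) (ModuleCat.of S (S ⊗[R] N))) ↔
      Subsingleton (ExtGroup R (n + 1) (ModuleCat.of R M) (ModuleCat.of R N)) := by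
  rw [(F.bc S).subsingleton_ext_iff (S ⊗[R] N) n, F.subsingleton_ext_iff N n]
  exact exact_basechange_iff (F.b n) (F.b (n + 1)) (F.b (n + 2)) (F.d n) (F.d (n + 1))

end

end StmtFive

/-- property (ee) descends along a flat local homomorphism. -/
theorem stmt5 (R S : Type) [CommRing R] [IsLocalRing R] [IsNoetherianRing R]
    [CommRing S] [IsLocalRing S] [IsNoetherianRing S]
    [Algebra R S] [Module.Flat R S] [IsLocalHom (algebraMap R S)]
    (h : PropEE S) : PropEE R := by
  haveI ff : Module.FaithfullyFlat R S := StmtFive.faithfullyFlat_of_flat_local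
  intro M N fM fN hMN
  obtain ⟨t, ht⟩ := hMN
  haveI := fM
  haveI := fN
  let FM := StmtFive.finiteRes R ↑M
  let FN := StmtFive.finiteRes R ↑N
  have hS : ExtEventuallyZero S (ModuleCat.of S (TensorProduct R S ↑M))
      (ModuleCat.of S (TensorProduct R S ↑N)) := by
    refine ⟨t + 1, fun i hi => ?_⟩
    obtain ⟨n, rfl⟩ : ∃ n, i = n + 1 := ⟨i - 1, by omega⟩
    exact (StmtFive.subsingleton_ext_basechange_iff S FM ↑N n).mpr (ht (n + 1) (by omega))
  have hS' := h _ _ (Module.Finite.base_change R S ↑M) (Module.Finite.base_change R S ↑N) hS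
  obtain ⟨u, hu⟩ := hS'
  refine ⟨u + 1, fun i hi => ?_⟩
  obtain ⟨n, rfl⟩ : ∃ n, i = n + 1 := ⟨i - 1, by omega⟩
  exact (StmtFive.subsingleton_ext_basechange_iff S FN ↑M n).mp (hu (n + 1) (by omega))
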